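/- Let (Xₙ) be real random variables, aₙ positive with aₙ/n → 0 and aₙ/√n → ∞, σ > 0, and suppose (n/aₙ²) log P((Xₙ - nμ)/aₙ ≤ -x-ε) → -(x+ε)²/(2σ²) for all x, ε > 0. If (Wₙ) are positive random variables with sup_n E[Wₙ] ≤ 1, then for all x > 0, liminf (n/aₙ²) log P((Xₙ + log Wₙ - nμ)/aₙ ≤ -x) ≥ -x²/(2σ²). -/

import Mathlib

open MeasureTheory Filter Topology

/-- auxiliary analytic lemma -/
lemma aux_liminf (a u v p : ℕ → ℝ) (L ε : ℝ) (hε : 0 < ε) (hLneg : L < 0)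
    (hapos : ∀ n, 0 < a n)
    (hu_nonneg : ∀ n, 0 ≤ u n)
    (ha1 : Tendsto (fun n => a n / n) atTop (𝓝 0))
    (ha_inf : Tendsto a atTop atTop)
    (hinv : Tendsto (fun n : ℕ => (n : ℝ) / (a n) ^ 2) atTop (𝓝 0))
    (hr : Tendsto (fun n : ℕ => ((n : ℝ) / (a n) ^ 2) * Real.log (u n)) atTop (𝓝 L))
    (hv : ∀ n, v n ≤ Real.exp (-(a n * ε)))
    (hsub : ∀ n, u n - v n ≤ p n) :
    ((L : ℝ) : EReal) ≤ liminf (fun n : ℕ => ((((n : ℝ) / (a n) ^ 2) * Real.log (p n) : ℝ) : EReal)) atTop := by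
  set r : ℕ → ℝ := fun n : ℕ => ((n : ℝ) / (a n) ^ 2) * Real.log (u n) with hrdef
  set e : ℕ → ℝ := fun n => Real.exp (-(a n * ε + Real.log (u n))) with hedef
  -- exponent tends to infinity
  have hexp : Tendsto (fun n => a n * ε + Real.log (u n)) atTop atTop := by
    have hc : Tendsto (fun n => ε + (a n / n) * r n) atTop (𝓝 ε) := by
      have h0 : Tendsto (fun n => (a n / n) * r n) atTop (𝓝 0) := by
        simpa using ha1.mul hr
      simpa using tendsto_const_nhds.add h0
    have hmain : Tendsto (fun n => a n * (ε + (a n / n) * r n)) atTop atTop :=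
      ha_inf.atTop_mul_pos hε hc
    apply hmain.congr'
    filter_upwards [eventually_ge_atTop 1] with n hn
    have hn0 : (n : ℝ) ≠ 0 := Nat.cast_ne_zero.mpr (by omega)
    have ha0 : a n ≠ 0 := (hapos n).ne'
    simp only [hrdef]
    field_simp
  have h_e : Tendsto e atTop (𝓝 0) :=
    Real.tendsto_exp_atBot.comp (tendsto_neg_atTop_atBot.comp hexp)
  have h1e : Tendsto (fun n => Real.log (1 - e n)) atTop (𝓝 0) := by
    have h1 : Tendsto (fun n => 1 - e n) atTop (𝓝 1) := by
      simpa using tendsto_const_nhds.sub h_e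
    have := (Real.continuousAt_log one_ne_zero).tendsto.comp h1
    simpa [Function.comp_def] using this
  -- the comparison sequence
  have hg : Tendsto (fun n => r n + ((n : ℝ) / (a n) ^ 2) * Real.log (1 - e n)) atTop (𝓝 L) := by
    simpa using hr.add (hinv.mul h1e)
  -- eventual inequality
  have hev : ∀ᶠ n in atTop,
      ((r n + ((n : ℝ) / (a n) ^ 2) * Real.log (1 - e n) : ℝ) : EReal) ≤
        ((((n : ℝ) / (a n) ^ 2) * Real.log (p n) : ℝ) : EReal) := by
    have hu_pos : ∀ᶠ n in atTop, 0 < u n := by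
      filter_upwards [hr.eventually_lt_const (by linarith : L < L / 2)] with n hn
      rcases (hu_nonneg n).lt_or_eq with h | h
      · exact h
      · exfalso
        have : r n = 0 := by simp [hrdef, ← h]
        have : L / 2 < 0 := by linarith
        linarith
    have h_half : ∀ᶠ n in atTop, e n < 1 / 2 := h_e.eventually_lt_const (by norm_num)
    filter_upwards [hu_pos, h_half] with n hun hen
    have hv_le : v n ≤ u n * e n := by
      have h1 : u n * e n = Real.exp (-(a n * ε)) := by
        simp only [hedef]
        rw [neg_add, Real.exp_add, Real.exp_neg (Real.log (u n)), Real.exp_log hun]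
        field_simp
      exact (hv n).trans_eq h1.symm
    have hp_ge : u n * (1 - e n) ≤ p n := by nlinarith [hsub n]
    have hpos : 0 < u n * (1 - e n) := mul_pos hun (by linarith)
    have h2 : Real.log (u n * (1 - e n)) ≤ Real.log (p n) := Real.log_le_log hpos hp_ge
    rw [Real.log_mul hun.ne' (by linarith : (1 : ℝ) - e n ≠ 0)] at h2
    have hc : (0 : ℝ) ≤ (n : ℝ) / (a n) ^ 2 := by positivity
    have h3 := mul_le_mul_of_nonneg_left h2 hc
    rw [mul_add] at h3
    exact_mod_cast (by simp only [hrdef]; linarith :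
      r n + ((n : ℝ) / (a n) ^ 2) * Real.log (1 - e n) ≤ ((n : ℝ) / (a n) ^ 2) * Real.log (p n))
  -- conclude on liminf
  have hcoe : Tendsto (fun n => ((r n + ((n : ℝ) / (a n) ^ 2) * Real.log (1 - e n) : ℝ) : EReal))
      atTop (𝓝 ((L : ℝ) : EReal)) := (continuous_coe_real_ereal.tendsto _).comp hg
  calc ((L : ℝ) : EReal) = liminf (fun n =>
        ((r n + ((n : ℝ) / (a n) ^ 2) * Real.log (1 - e n) : ℝ) : EReal)) atTop :=
        hcoe.liminf_eq.symm
    _ ≤ _ := liminf_le_liminf hev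


/-- Moderate deviation lower-bound transfer: if
`(n/aₙ²) log P((Xₙ - nμ)/aₙ ≤ -x-ε) → -(x+ε)²/(2σ²)` for all `x, ε > 0`, and `(Wₙ)` are
positive random variables with `sup_n E[Wₙ] ≤ 1`, then for all `x > 0`,
`liminf (n/aₙ²) log P((Xₙ + log Wₙ - nμ)/aₙ ≤ -x) ≥ -x²/(2σ²)`. -/
theorem stmt_15 {Ω : Type*} [MeasurableSpace Ω] (P : Measure Ω) [IsProbabilityMeasure P]
    (X W : ℕ → Ω → ℝ) (hXmeas : ∀ n, Measurable (X n)) (hWmeas : ∀ n, Measurable (W n))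
    (a : ℕ → ℝ) (hapos : ∀ n, 0 < a n)
    (ha1 : Tendsto (fun n => a n / n) atTop (𝓝 0))
    (ha2 : Tendsto (fun n => a n / Real.sqrt n) atTop atTop)
    (σ mu : ℝ) (hσ : 0 < σ)
    (hX : ∀ x : ℝ, 0 < x → ∀ ε : ℝ, 0 < ε →
      Tendsto (fun n => (n / (a n) ^ 2) *
          Real.log (P {ω | (X n ω - n * mu) / a n ≤ -x - ε}).toReal)
        atTop (𝓝 (-(x + ε) ^ 2 / (2 * σ ^ 2))))
    (hWpos : ∀ n, ∀ᵐ ω ∂P, 0 < W n ω)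
    (hWint : ∀ n, Integrable (W n) P) (hWmean : ∀ n, ∫ ω, W n ω ∂P ≤ 1) :
    ∀ x : ℝ, 0 < x →
      (-(x ^ 2 / (2 * σ ^ 2)) : EReal) ≤
        liminf (fun n => ((n / (a n) ^ 2) *
          Real.log (P {ω | (X n ω + Real.log (W n ω) - n * mu) / a n ≤ -x}).toReal
            : EReal)) atTop := by
  intro x hx
  -- basic asymptotics
  have ha_inf : Tendsto a atTop atTop := by
    apply tendsto_atTop_mono' atTop _ ha2
    filter_upwards [eventually_ge_atTop 1] with n hn
    have h1 : (1 : ℝ) ≤ Real.sqrt n := Real.one_le_sqrt.mpr (by exact_mod_cast hn)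
    calc a n / Real.sqrt n ≤ a n / 1 :=
          div_le_div_of_nonneg_left (hapos n).le zero_lt_one h1
      _ = a n := div_one _
  have hinv : Tendsto (fun n : ℕ => (n : ℝ) / (a n) ^ 2) atTop (𝓝 0) := by
    have h1 : Tendsto (fun n : ℕ => Real.sqrt n / a n) atTop (𝓝 0) := by
      have := ha2.inv_tendsto_atTop
      apply this.congr
      intro n
      simp [Pi.inv_apply, inv_div]
    have h2 := h1.mul h1
    rw [mul_zero] at h2
    apply h2.congr
    intro n
    rw [div_mul_div_comm, Real.mul_self_sqrt (Nat.cast_nonneg n), ← sq]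
  -- the key bound for each ε > 0
  have key : ∀ ε : ℝ, 0 < ε →
      ((-(x + ε) ^ 2 / (2 * σ ^ 2) : ℝ) : EReal) ≤
        liminf (fun n => ((n / (a n) ^ 2) *
          Real.log (P {ω | (X n ω + Real.log (W n ω) - n * mu) / a n ≤ -x}).toReal
            : EReal)) atTop := by
    intro ε hε
    have hLneg : -(x + ε) ^ 2 / (2 * σ ^ 2) < 0 := by
      apply div_neg_of_neg_of_pos
      · nlinarith
      · positivity
    refine aux_liminf a
      (fun n => (P {ω | (X n ω - n * mu) / a n ≤ -x - ε}).toReal)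
      (fun n => (P {ω | Real.exp (a n * ε) ≤ W n ω}).toReal)
      (fun n => (P {ω | (X n ω + Real.log (W n ω) - n * mu) / a n ≤ -x}).toReal)
      _ ε hε hLneg hapos (fun n => ENNReal.toReal_nonneg) ha1 ha_inf hinv (hX x hx ε hε) ?_ ?_
    · -- Markov
      intro n
      have h1 := mul_meas_ge_le_integral_of_nonneg
        ((hWpos n).mono fun ω h => h.le) (hWint n) (Real.exp (a n * ε))
      have h2 : Real.exp (a n * ε) *
          (P {ω | Real.exp (a n * ε) ≤ W n ω}).toReal ≤ 1 := h1.trans (hWmean n)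
      have h3 := Real.exp_pos (a n * ε)
      have h4 : Real.exp (-(a n * ε)) * Real.exp (a n * ε) = 1 := by
        rw [← Real.exp_add]; simp
      nlinarith [Real.exp_pos (-(a n * ε)),
        ENNReal.toReal_nonneg (a := P {ω | Real.exp (a n * ε) ≤ W n ω})]
    · -- set inclusion
      intro n
      set A := {ω | (X n ω + Real.log (W n ω) - n * mu) / a n ≤ -x} with hA
      set B := {ω | (X n ω - n * mu) / a n ≤ -x - ε} with hB
      set C := {ω | Real.exp (a n * ε) ≤ W n ω} with hC
      have hmono : P B ≤ P (A ∪ C) := by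
        apply measure_mono_ae
        filter_upwards [hWpos n] with ω hWω hωB
        by_cases hW : Real.exp (a n * ε) ≤ W n ω
        · exact Or.inr hW
        · left
          push_neg at hW
          have hlog : Real.log (W n ω) < a n * ε :=
            (Real.log_lt_iff_lt_exp hWω).mpr hW
          have hdiv : Real.log (W n ω) / a n < ε :=
            (div_lt_iff₀ (hapos n)).mpr (by linarith [mul_comm (a n) ε])
          have heq : (X n ω + Real.log (W n ω) - n * mu) / a n =
              (X n ω - n * mu) / a n + Real.log (W n ω) / a n := by ring
          have hωB' : (X n ω - n * mu) / a n ≤ -x - ε := hωB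
          show (X n ω + Real.log (W n ω) - n * mu) / a n ≤ -x
          rw [heq]; linarith
      have h4 : P B ≤ P A + P C := hmono.trans (measure_union_le _ _)
      have h5 : (P B).toReal ≤ (P A).toReal + (P C).toReal := by
        have h6 := ENNReal.toReal_mono (a := P B) (b := P A + P C)
          (by finiteness) h4
        rwa [ENNReal.toReal_add (by finiteness) (by finiteness)] at h6
      linarith
  -- let ε → 0
  have hlim : Tendsto (fun ε : ℝ => ((-(x + ε) ^ 2 / (2 * σ ^ 2) : ℝ) : EReal)) (𝓝[>] 0)
      (𝓝 ((-(x) ^ 2 / (2 * σ ^ 2) : ℝ) : EReal)) := by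
    apply (continuous_coe_real_ereal.tendsto _).comp
    have h1 : Tendsto (fun ε : ℝ => -(x + ε) ^ 2 / (2 * σ ^ 2)) (𝓝 0)
        (𝓝 (-(x + 0) ^ 2 / (2 * σ ^ 2))) := by
      apply Continuous.tendsto
      continuity
    rw [add_zero] at h1
    exact h1.mono_left nhdsWithin_le_nhds
  have hfinal := le_of_tendsto hlim
    (Filter.eventually_of_mem self_mem_nhdsWithin fun ε hε => key ε hε)
  rw [show (-(x ^ 2 / (2 * σ ^ 2)) : EReal) = ((-x ^ 2 / (2 * σ ^ 2) : ℝ) : EReal) by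
    rw [neg_div, EReal.coe_neg, EReal.coe_div]; norm_cast]
  exact hfinal
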